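/- Let g : ℝ → ℝ be continuous and λ > 0 with g(r) = 0 for all r ≥ λ/2, and let τ(u,v) = σ_{2π·g(‖u‖)}(u,v) for (u,v) ∈ T with u ≠ 0. Define Ψ : [0,1] × (T ∖ {u = 0}) → T ∖ {u = 0} by Ψ(t,(u,v)) = σ_{4πt·g(‖u‖)}(u,v). Then Ψ is continuous, Ψ(0,·) is the identity, Ψ(1,·) = τ∘τ, and Ψ(t,(u,v)) = (u,v) whenever ‖u‖ ≥ λ/2. Hence the square of the model Dehn twist restricted to the complement of the zero section is isotopic to the identity through compactly supported maps. -/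

import Mathlib

/-- The normalized geodesic flow on the standard model `T*S² ⊂ ℝ³ × ℝ³`. -/
noncomputable def geoFlow (t : ℝ)
    (p : EuclideanSpace ℝ (Fin 3) × EuclideanSpace ℝ (Fin 3)) :
    EuclideanSpace ℝ (Fin 3) × EuclideanSpace ℝ (Fin 3) :=
  (Real.cos t • p.1 - (Real.sin t * ‖p.1‖) • p.2,
   Real.cos t • p.2 + (Real.sin t / ‖p.1‖) • p.1)

/-- The complement of the zero section in the standard model of `T*S²`. -/
def cotangentS2offZero : Set (EuclideanSpace ℝ (Fin 3) × EuclideanSpace ℝ (Fin 3)) :=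
  {p | inner ℝ p.1 p.2 = (0 : ℝ) ∧ ‖p.2‖ = 1 ∧ p.1 ≠ 0}

/-- The model Dehn twist off the zero section, `τ(p) = σ_{2π g(‖u‖)}(p)`. -/
noncomputable def twistOffZero (g : ℝ → ℝ)
    (p : EuclideanSpace ℝ (Fin 3) × EuclideanSpace ℝ (Fin 3)) :
    EuclideanSpace ℝ (Fin 3) × EuclideanSpace ℝ (Fin 3) :=
  geoFlow (2 * Real.pi * g ‖p.1‖) p

/-- The isotopy `Ψ(t,p) = σ_{4πt g(‖u‖)}(p)` between the identity and the squared twist. -/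
noncomputable def twistIsotopy (g : ℝ → ℝ) (t : ℝ)
    (p : EuclideanSpace ℝ (Fin 3) × EuclideanSpace ℝ (Fin 3)) :
    EuclideanSpace ℝ (Fin 3) × EuclideanSpace ℝ (Fin 3) :=
  geoFlow (4 * Real.pi * t * g ‖p.1‖) p

open Real

lemma geoFlow_zero (p : EuclideanSpace ℝ (Fin 3) × EuclideanSpace ℝ (Fin 3)) :
    geoFlow 0 p = p := by
  simp [geoFlow]

lemma norm_fst_geoFlow (t : ℝ) {p : EuclideanSpace ℝ (Fin 3) × EuclideanSpace ℝ (Fin 3)}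
    (h0 : inner ℝ p.1 p.2 = (0:ℝ)) (hv : ‖p.2‖ = 1) :
    ‖(geoFlow t p).1‖ = ‖p.1‖ := by
  have h : ‖(geoFlow t p).1‖^2 = ‖p.1‖^2 := by
    simp only [geoFlow]
    rw [norm_sub_sq_real]
    simp [norm_smul, inner_smul_left, inner_smul_right, h0, hv, mul_pow, sq_abs]
    nlinarith [sin_sq_add_cos_sq t, norm_nonneg p.1]
  calc ‖(geoFlow t p).1‖ = √(‖(geoFlow t p).1‖^2) := (Real.sqrt_sq (norm_nonneg _)).symm
    _ = √(‖p.1‖^2) := by rw [h]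
    _ = ‖p.1‖ := Real.sqrt_sq (norm_nonneg _)

lemma inner_geoFlow (t : ℝ) {p : EuclideanSpace ℝ (Fin 3) × EuclideanSpace ℝ (Fin 3)}
    (h0 : inner ℝ p.1 p.2 = (0:ℝ)) (hv : ‖p.2‖ = 1) (hu : p.1 ≠ 0) :
    inner ℝ (geoFlow t p).1 (geoFlow t p).2 = (0:ℝ) := by
  have hne : ‖p.1‖ ≠ 0 := norm_ne_zero_iff.mpr hu
  simp only [geoFlow]
  rw [inner_sub_left, inner_add_right, inner_add_right]
  have h0' : inner ℝ p.2 p.1 = (0:ℝ) := by rw [real_inner_comm]; exact h0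
  simp only [inner_smul_left, inner_smul_right, real_inner_self_eq_norm_sq,
    h0, h0', hv, RCLike.star_def, starRingEnd_apply, star_trivial]
  field_simp
  ring

lemma norm_snd_geoFlow (t : ℝ) {p : EuclideanSpace ℝ (Fin 3) × EuclideanSpace ℝ (Fin 3)}
    (h0 : inner ℝ p.1 p.2 = (0:ℝ)) (hv : ‖p.2‖ = 1) (hu : p.1 ≠ 0) :
    ‖(geoFlow t p).2‖ = 1 := by
  have hne : ‖p.1‖ ≠ 0 := norm_ne_zero_iff.mpr hu
  have h : ‖(geoFlow t p).2‖^2 = 1 := by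
    simp only [geoFlow]
    rw [norm_add_sq_real]
    have h0' : inner ℝ p.2 p.1 = (0:ℝ) := by rw [real_inner_comm]; exact h0
    simp [norm_smul, inner_smul_left, inner_smul_right, h0, h0', hv,
      mul_pow, sq_abs, div_pow]
    field_simp
    exact cos_sq_add_sin_sq t
  calc ‖(geoFlow t p).2‖ = √(‖(geoFlow t p).2‖^2) := (Real.sqrt_sq (norm_nonneg _)).symm
    _ = 1 := by rw [h]; exact Real.sqrt_one

lemma geoFlow_mem (t : ℝ) {p : EuclideanSpace ℝ (Fin 3) × EuclideanSpace ℝ (Fin 3)}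
    (hp : p ∈ cotangentS2offZero) : geoFlow t p ∈ cotangentS2offZero := by
  obtain ⟨h0, hv, hu⟩ := hp
  refine ⟨inner_geoFlow t h0 hv hu, norm_snd_geoFlow t h0 hv hu, ?_⟩
  have := norm_fst_geoFlow t h0 hv
  intro h
  rw [h, norm_zero] at this
  exact hu (norm_eq_zero.mp this.symm)

lemma geoFlow_geoFlow (s t : ℝ) {p : EuclideanSpace ℝ (Fin 3) × EuclideanSpace ℝ (Fin 3)}
    (h0 : inner ℝ p.1 p.2 = (0:ℝ)) (hv : ‖p.2‖ = 1) (hu : p.1 ≠ 0) :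
    geoFlow s (geoFlow t p) = geoFlow (s + t) p := by
  have hne : ‖p.1‖ ≠ 0 := norm_ne_zero_iff.mpr hu
  have hn : ‖(geoFlow t p).1‖ = ‖p.1‖ := norm_fst_geoFlow t h0 hv
  refine Prod.ext ?_ ?_
  · show Real.cos s • (geoFlow t p).1 - (Real.sin s * ‖(geoFlow t p).1‖) • (geoFlow t p).2 = _
    rw [hn]
    show Real.cos s • (Real.cos t • p.1 - (Real.sin t * ‖p.1‖) • p.2) -
        (Real.sin s * ‖p.1‖) • (Real.cos t • p.2 + (Real.sin t / ‖p.1‖) • p.1) =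
        Real.cos (s+t) • p.1 - (Real.sin (s+t) * ‖p.1‖) • p.2
    rw [Real.cos_add, Real.sin_add]
    match_scalars <;> field_simp <;> ring
  · show Real.cos s • (geoFlow t p).2 + (Real.sin s / ‖(geoFlow t p).1‖) • (geoFlow t p).1 = _
    rw [hn]
    show Real.cos s • (Real.cos t • p.2 + (Real.sin t / ‖p.1‖) • p.1) +
        (Real.sin s / ‖p.1‖) • (Real.cos t • p.1 - (Real.sin t * ‖p.1‖) • p.2) =
        Real.cos (s+t) • p.2 + (Real.sin (s+t) / ‖p.1‖) • p.1
    rw [Real.cos_add, Real.sin_add]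
    match_scalars <;> field_simp <;> ring

/-- **The squared model Dehn twist is isotopic to the identity away from the zero
section**, through an isotopy supported in `‖u‖ < λ/2`. -/
theorem squared_twist_isotopic_to_id (g : ℝ → ℝ) (hg : Continuous g)
    (lam : ℝ) (hlam : 0 < lam) (hg0 : ∀ r : ℝ, lam / 2 ≤ r → g r = 0) :
    ContinuousOn (fun q : ℝ × (EuclideanSpace ℝ (Fin 3) × EuclideanSpace ℝ (Fin 3)) =>
        twistIsotopy g q.1 q.2) (Set.Icc (0 : ℝ) 1 ×ˢ cotangentS2offZero) ∧
    (∀ t ∈ Set.Icc (0 : ℝ) 1, ∀ p ∈ cotangentS2offZero,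
        twistIsotopy g t p ∈ cotangentS2offZero) ∧
    (∀ p ∈ cotangentS2offZero, twistIsotopy g 0 p = p) ∧
    (∀ p ∈ cotangentS2offZero, twistIsotopy g 1 p = twistOffZero g (twistOffZero g p)) ∧
    (∀ t ∈ Set.Icc (0 : ℝ) 1, ∀ p ∈ cotangentS2offZero,
        lam / 2 ≤ ‖p.1‖ → twistIsotopy g t p = p) := by
  refine ⟨?_, ?_, ?_, ?_, ?_⟩
  · -- continuity
    simp only [twistIsotopy, geoFlow]
    have hne : ∀ q ∈ (Set.Icc (0 : ℝ) 1 ×ˢ cotangentS2offZero),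
        ‖(q.2).1‖ ≠ 0 := fun q hq => norm_ne_zero_iff.mpr hq.2.2.2
    apply ContinuousOn.prodMk
    · apply Continuous.continuousOn
      fun_prop
    · apply ContinuousOn.add
      · apply Continuous.continuousOn
        fun_prop
      · apply ContinuousOn.fun_smul
        · exact ContinuousOn.div (by fun_prop) (by fun_prop) hne
        · fun_prop
  · intro t _ p hp
    exact geoFlow_mem _ hp
  · intro p _
    simp [twistIsotopy, geoFlow_zero]
  · intro p hp
    obtain ⟨h0, hv, hu⟩ := hp
    have hn : ‖(geoFlow (2 * Real.pi * g ‖p.1‖) p).1‖ = ‖p.1‖ := norm_fst_geoFlow _ h0 hv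
    simp only [twistOffZero, twistIsotopy, hn]
    rw [geoFlow_geoFlow _ _ h0 hv hu]
    congr 1
    ring
  · intro t _ p _ hle
    have : g ‖p.1‖ = 0 := hg0 _ hle
    simp [twistIsotopy, this, geoFlow_zero]
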